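/- Let c : I → ℝ⁴ be a C² curve and λ : I → ℝ a C¹ function satisfying the Euler–Lagrange system ẍ₁ = λ̇x₄ + 2λẋ₄, ẍ₂ = −λ̇x₃ − 2λẋ₃, ẍ₃ = −λ̇x₂ − 2λẋ₂, ẍ₄ = λ̇x₁ + 2λẋ₁. Then the horizontal coordinates satisfy α̇(s) = 2λ(s)β(s) and β̇(s) = 2λ(s)α(s) for all s ∈ I. -/
import Mathlib


open Real Set

noncomputable section

/-- Pseudo-Euclidean inner product of signature (2,2) on ℝ⁴. -/
def ip (x y : Fin 4 → ℝ) : ℝ :=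
  -(x 0 * y 0) - x 1 * y 1 + x 2 * y 2 + x 3 * y 3

/-- Anti-de Sitter space H = {x : ⟨x,x⟩ = -1}. -/
def AdS : Set (Fin 4 → ℝ) := {x | ip x x = -1}

/-- The vector field T(x) = (−x₂, x₁, x₄, −x₃). -/
def Tf (x : Fin 4 → ℝ) : Fin 4 → ℝ := ![-(x 1), x 0, x 3, -(x 2)]

/-- The vector field X(x) = (x₃, x₄, x₁, x₂). -/
def Xf (x : Fin 4 → ℝ) : Fin 4 → ℝ := ![x 2, x 3, x 0, x 1]

/-- The vector field Y(x) = (x₄, −x₃, −x₂, x₁). -/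
def Yf (x : Fin 4 → ℝ) : Fin 4 → ℝ := ![x 3, -(x 2), -(x 1), x 0]

/-- The normal vector field N(x) = x. -/
def Nf (x : Fin 4 → ℝ) : Fin 4 → ℝ := x

/-- α(s) = ⟨ċ(s), T(c(s))⟩. -/
def alphaC (c : ℝ → Fin 4 → ℝ) (s : ℝ) : ℝ := ip (deriv c s) (Tf (c s))

/-- β(s) = ⟨ċ(s), X(c(s))⟩. -/
def betaC (c : ℝ → Fin 4 → ℝ) (s : ℝ) : ℝ := ip (deriv c s) (Xf (c s))

/-- γ(s) = ⟨ċ(s), Y(c(s))⟩. -/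
def gammaC (c : ℝ → Fin 4 → ℝ) (s : ℝ) : ℝ := ip (deriv c s) (Yf (c s))

/-- along a C² solution of the Euler–Lagrange system
ẍ₁ = λ̇x₄ + 2λẋ₄, ẍ₂ = −λ̇x₃ − 2λẋ₃, ẍ₃ = −λ̇x₂ − 2λẋ₂, ẍ₄ = λ̇x₁ + 2λẋ₁
one has α̇ = 2λβ and β̇ = 2λα. -/
theorem euler_lagrange_horizontal_coords (I : Set ℝ) (hI : I.OrdConnected)
    (c : ℝ → Fin 4 → ℝ) (lam : ℝ → ℝ)
    (hc1 : ∀ s ∈ I, DifferentiableAt ℝ c s)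
    (hc2 : ∀ s ∈ I, DifferentiableAt ℝ (deriv c) s)
    (hlam : ∀ s ∈ I, DifferentiableAt ℝ lam s)
    (hEL1 : ∀ s ∈ I, deriv (deriv c) s 0
      = deriv lam s * c s 3 + 2 * lam s * deriv c s 3)
    (hEL2 : ∀ s ∈ I, deriv (deriv c) s 1
      = -(deriv lam s * c s 2) - 2 * lam s * deriv c s 2)
    (hEL3 : ∀ s ∈ I, deriv (deriv c) s 2
      = -(deriv lam s * c s 1) - 2 * lam s * deriv c s 1)
    (hEL4 : ∀ s ∈ I, deriv (deriv c) s 3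
      = deriv lam s * c s 0 + 2 * lam s * deriv c s 0) :
    ∀ s ∈ I, deriv (alphaC c) s = 2 * lam s * betaC c s ∧
      deriv (betaC c) s = 2 * lam s * alphaC c s := by
  intro s hs
  have hcomp : ∀ (f : ℝ → Fin 4 → ℝ), DifferentiableAt ℝ f s → ∀ i : Fin 4,
      HasDerivAt (fun t => f t i) (deriv f s i) s := fun f hf i =>
    hasDerivAt_pi.1 hf.hasDerivAt i
  have hc := hcomp c (hc1 s hs)
  have hd := hcomp (deriv c) (hc2 s hs)
  have halpha : HasDerivAt (alphaC c)
      (deriv (deriv c) s 0 * c s 1 + deriv c s 0 * deriv c s 1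
        - (deriv (deriv c) s 1 * c s 0 + deriv c s 1 * deriv c s 0)
        + (deriv (deriv c) s 2 * c s 3 + deriv c s 2 * deriv c s 3)
        - (deriv (deriv c) s 3 * c s 2 + deriv c s 3 * deriv c s 2)) s := by
    have : HasDerivAt (fun t => deriv c t 0 * c t 1 - deriv c t 1 * c t 0
        + deriv c t 2 * c t 3 - deriv c t 3 * c t 2)
        (deriv (deriv c) s 0 * c s 1 + deriv c s 0 * deriv c s 1
        - (deriv (deriv c) s 1 * c s 0 + deriv c s 1 * deriv c s 0)
        + (deriv (deriv c) s 2 * c s 3 + deriv c s 2 * deriv c s 3)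
        - (deriv (deriv c) s 3 * c s 2 + deriv c s 3 * deriv c s 2)) s :=
      ((((hd 0).mul (hc 1)).sub ((hd 1).mul (hc 0))).add
        ((hd 2).mul (hc 3))).sub ((hd 3).mul (hc 2))
    convert this using 2 with t
    simp [alphaC, ip, Tf]
    try ring
  have hbeta : HasDerivAt (betaC c)
      (-(deriv (deriv c) s 0 * c s 2 + deriv c s 0 * deriv c s 2)
        - (deriv (deriv c) s 1 * c s 3 + deriv c s 1 * deriv c s 3)
        + (deriv (deriv c) s 2 * c s 0 + deriv c s 2 * deriv c s 0)
        + (deriv (deriv c) s 3 * c s 1 + deriv c s 3 * deriv c s 1)) s := by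
    have : HasDerivAt (fun t => -(deriv c t 0 * c t 2) - deriv c t 1 * c t 3
        + deriv c t 2 * c t 0 + deriv c t 3 * c t 1)
        (-(deriv (deriv c) s 0 * c s 2 + deriv c s 0 * deriv c s 2)
        - (deriv (deriv c) s 1 * c s 3 + deriv c s 1 * deriv c s 3)
        + (deriv (deriv c) s 2 * c s 0 + deriv c s 2 * deriv c s 0)
        + (deriv (deriv c) s 3 * c s 1 + deriv c s 3 * deriv c s 1)) s :=
      (((((hd 0).mul (hc 2)).neg.sub ((hd 1).mul (hc 3))).add
        ((hd 2).mul (hc 0))).add ((hd 3).mul (hc 1)))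
    convert this using 2 with t
    try simp [betaC, ip, Xf]
    try ring
  constructor
  · rw [halpha.deriv, hEL1 s hs, hEL2 s hs, hEL3 s hs, hEL4 s hs]
    simp [betaC, ip, Xf]
    try ring
  · rw [hbeta.deriv, hEL1 s hs, hEL2 s hs, hEL3 s hs, hEL4 s hs]
    simp [alphaC, ip, Tf]
    try ring
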